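/- For the forward-backward selection case analysis: define v'_min(ϑ,ρ) = max{1, √((1−ϑ)/(1−ρ²))} for ρ ∈ (−1,1), ϑ ∈ (0,1). Then for all ρ with |ρ| ≤ 0.576 and all ϑ ∈ (0,1), max{ v'_min + √(1−ϑ), √((1−2ϑ)₊/(1−ρ²)) + v'_min } ≥ √(2(1−ϑ)/(1−|ρ|)). -/

import Mathlib

private lemma sq_le_imp_aux (x y : ℝ) (hy : 0 ≤ y) (h : x ^ 2 ≤ y ^ 2) : x ≤ y := by
  nlinarith

/-- For `|ρ| ≤ 0.576`, the curve `√(2(1−ϑ)/(1−|ρ|))` is dominated by the other two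
candidate pieces of the forward-backward selection phase curve, where
`v'_min = max{1, √((1−ϑ)/(1−ρ²))}`. -/
theorem stmt_18 (ρ ϑ : ℝ) (hρ : ρ ∈ Set.Ioo (-1 : ℝ) 1) (hρ' : |ρ| ≤ 0.576)
    (hϑ : ϑ ∈ Set.Ioo (0 : ℝ) 1) :
    let vmin := max 1 (Real.sqrt ((1 - ϑ) / (1 - ρ ^ 2)))
    Real.sqrt (2 * (1 - ϑ) / (1 - |ρ|)) ≤
      max (vmin + Real.sqrt (1 - ϑ))
        (Real.sqrt (max (1 - 2 * ϑ) 0 / (1 - ρ ^ 2)) + vmin) := by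
  intro vmin
  obtain ⟨hρ1, hρ2⟩ := hρ
  obtain ⟨hϑ1, hϑ2⟩ := hϑ
  have hv : Real.sqrt ((1 - ϑ) / (1 - ρ ^ 2)) ≤ vmin := le_max_right _ _
  set r := |ρ| with hrdef
  have hr0 : 0 ≤ r := abs_nonneg ρ
  have hr1 : r ≤ 0.576 := hρ'
  have hrlt : r < 1 := by rw [hrdef, abs_lt]; exact ⟨hρ1, hρ2⟩
  have hr2 : ρ ^ 2 = r ^ 2 := (sq_abs ρ).symm
  have ht : 0 < 1 - ϑ := by linarith
  set t := 1 - ϑ with htdef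
  have h1r : 0 < 1 - r := by linarith
  have h1r' : 0 < 1 + r := by linarith
  have hD : 0 < 1 - ρ ^ 2 := by rw [hr2]; nlinarith
  have hne1 : (1 : ℝ) - r ≠ 0 := ne_of_gt h1r
  have hne2 : (1 : ℝ) + r ≠ 0 := ne_of_gt h1r'
  have hne3 : (1 : ℝ) - r ^ 2 ≠ 0 := by nlinarith
  set a := Real.sqrt (2 * t / (1 - r)) with hadef
  set b := Real.sqrt (t / (1 - ρ ^ 2)) with hbdef
  set c := Real.sqrt t with hcdef
  have ha0 : 0 ≤ a := Real.sqrt_nonneg _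
  have hb0 : 0 ≤ b := Real.sqrt_nonneg _
  have hc0 : 0 ≤ c := Real.sqrt_nonneg _
  have ha2 : a ^ 2 = 2 * t / (1 - r) := Real.sq_sqrt (by positivity)
  have hb2 : b ^ 2 = t / (1 - ρ ^ 2) := Real.sq_sqrt (by positivity)
  have hc2 : c ^ 2 = t := Real.sq_sqrt ht.le
  have key : a ≤ b + c := by
    have hpoly : r ^ 2 * (r + 2) ^ 2 ≤ 4 * ((1 - r) * (1 + r)) := by nlinarith
    have hX2 : (a ^ 2 - b ^ 2 - c ^ 2) ^ 2 ≤ (2 * (b * c)) ^ 2 := by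
      have hbc2 : (b * c) ^ 2 = t ^ 2 / ((1 - r) * (1 + r)) := by
        rw [mul_pow, hb2, hc2, hr2]; field_simp; ring
      have hL : a ^ 2 - b ^ 2 - c ^ 2 = t * (r * (r + 2)) / ((1 - r) * (1 + r)) := by
        rw [ha2, hb2, hc2, hr2]
        field_simp
        ring
      rw [hL, mul_pow, hbc2, div_pow, mul_div_assoc', div_le_div_iff₀ (by positivity) (by positivity)]
      nlinarith [mul_le_mul_of_nonneg_left hpoly
        (by positivity : (0:ℝ) ≤ t ^ 2 * ((1 - r) * (1 + r)))]
    have hbc : a ^ 2 - b ^ 2 - c ^ 2 ≤ 2 * (b * c) :=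
      sq_le_imp_aux _ _ (by positivity) hX2
    have hsq : a ^ 2 ≤ (b + c) ^ 2 := by
      have hexp : (b + c) ^ 2 = b ^ 2 + 2 * (b * c) + c ^ 2 := by ring
      linarith
    exact sq_le_imp_aux _ _ (by positivity) hsq
  refine le_trans ?_ (le_max_left _ _)
  exact le_trans key (add_le_add_left hv c)
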